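/- Let Q : ℝ² → ℝ be a Schwartz function satisfying ΔQ − Q + Q³ = 0 on ℝ². Then ∫_{ℝ²} |∇Q(y)|² dy = (1/2) ∫_{ℝ²} Q(y)⁴ dy; equivalently, the energy E(Q) = ∫|∇Q|² − (1/2)∫Q⁴ of the ground state vanishes. -/

import Mathlib

open MeasureTheory

noncomputable section

abbrev E2 := EuclideanSpace ℝ (Fin 2)

/-- The partial derivative `∂f/∂yᵢ` of a function on `ℝ²`. -/
def pd (i : Fin 2) (f : E2 → ℝ) (y : E2) : ℝ :=
  fderiv ℝ f y (EuclideanSpace.single i 1)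

/-- The Laplacian on `ℝ²`. -/
def lap (f : E2 → ℝ) (y : E2) : ℝ :=
  ∑ i, pd i (pd i f) y

namespace GSaux

open SchwartzMap

/-- basis directions -/
def eb (i : Fin 2) : E2 := EuclideanSpace.single i 1

/-- derivative in direction `eb i`, as a Schwartz map -/
def Dv (i : Fin 2) (f : SchwartzMap E2 ℝ) : SchwartzMap E2 ℝ := LineDeriv.lineDerivOpCLM ℝ (SchwartzMap E2 ℝ) (eb i) f

lemma Dv_apply (i : Fin 2) (f : SchwartzMap E2 ℝ) (y : E2) :
    Dv i f y = fderiv ℝ f y (eb i) := rfl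

lemma temperate (f : SchwartzMap E2 ℝ) : Function.HasTemperateGrowth ⇑f := by
  refine ⟨f.smooth ⊤, fun n => ⟨0, SchwartzMap.seminorm ℝ 0 n f, fun x => ?_⟩⟩
  simpa using f.norm_iteratedFDeriv_le_seminorm ℝ n x

/-- product of Schwartz functions, as a Schwartz map -/
def mulS (f g : SchwartzMap E2 ℝ) : SchwartzMap E2 ℝ :=
  bilinLeftCLM (ContinuousLinearMap.mul ℝ ℝ) (temperate g) f

lemma mulS_apply (f g : SchwartzMap E2 ℝ) (y : E2) : mulS f g y = f y * g y := by rfl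

/-- coordinate multiple of a Schwartz function -/
def xMul (j : Fin 2) (f : SchwartzMap E2 ℝ) : SchwartzMap E2 ℝ :=
  bilinLeftCLM (ContinuousLinearMap.mul ℝ ℝ)
    (EuclideanSpace.proj (𝕜 := ℝ) j : E2 →L[ℝ] ℝ).hasTemperateGrowth f

lemma xMul_apply (j : Fin 2) (f : SchwartzMap E2 ℝ) (y : E2) : xMul j f y = f y * y j := by rfl

lemma integrable_eq (f : SchwartzMap E2 ℝ) {g : E2 → ℝ} (h : ∀ y, g y = f y) :
    Integrable g (volume : Measure E2) := by
  have : g = ⇑f := funext h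
  rw [this]; exact f.integrable

lemma ibp {f g : E2 → ℝ} {v : E2} (hf : Differentiable ℝ f) (hg : Differentiable ℝ g)
    (h1 : Integrable (fun y => fderiv ℝ f y v * g y) (volume : Measure E2))
    (h2 : Integrable (fun y => f y * fderiv ℝ g y v) (volume : Measure E2))
    (h3 : Integrable (fun y => f y * g y) (volume : Measure E2)) :
    ∫ y : E2, f y * fderiv ℝ g y v = - ∫ y : E2, fderiv ℝ f y v * g y :=
  integral_mul_fderiv_eq_neg_fderiv_mul_of_integrable h1 h2 h3 (fun x _ => hf x) (fun x _ => hg x)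

lemma fderiv_mul_apply {c d : E2 → ℝ} (hc : Differentiable ℝ c) (hd : Differentiable ℝ d)
    (y v : E2) :
    fderiv ℝ (fun z => c z * d z) y v = c y * fderiv ℝ d y v + d y * fderiv ℝ c y v := by
  rw [fderiv_fun_mul (hc y) (hd y)]; simp

lemma coord_eq (j : Fin 2) : (fun y : E2 => y j) = ⇑(EuclideanSpace.proj (𝕜 := ℝ) j) := rfl

lemma coord_diff (j : Fin 2) : Differentiable ℝ (fun y : E2 => y j) := by
  rw [coord_eq]; exact (EuclideanSpace.proj (𝕜 := ℝ) j).differentiable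

lemma fderiv_coord (i j : Fin 2) (y : E2) :
    fderiv ℝ (fun z : E2 => z j) y (eb i) = if j = i then 1 else 0 := by
  rw [coord_eq, ContinuousLinearMap.fderiv]
  simp [eb, EuclideanSpace.single_apply]

/-- IBP of two Schwartz functions. -/
lemma L1 (i : Fin 2) (f g : SchwartzMap E2 ℝ) :
    ∫ y : E2, f y * Dv i g y = - ∫ y : E2, Dv i f y * g y := by
  have h := ibp (v := eb i) f.differentiable g.differentiable
    (integrable_eq (mulS (Dv i f) g) (fun y => by rw [mulS_apply]; rfl))
    (integrable_eq (mulS f (Dv i g)) (fun y => by rw [mulS_apply]; rfl))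
    (integrable_eq (mulS f g) (fun y => by rw [mulS_apply]))
  exact h

/-- Divergence-type identity with coordinate weight. -/
lemma key_div (j : Fin 2) {g g' : E2 → ℝ} (hg : Differentiable ℝ g)
    (hg' : ∀ y, fderiv ℝ g y (eb j) = g' y)
    (i1 : Integrable g (volume : Measure E2))
    (i2 : Integrable (fun y => y j * g' y) (volume : Measure E2))
    (i3 : Integrable (fun y => y j * g y) (volume : Measure E2)) :
    ∫ y : E2, y j * g' y = - ∫ y : E2, g y := by
  have hc : ∀ y : E2, fderiv ℝ (fun z : E2 => z j) y (eb j) = 1 := fun y => by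
    rw [fderiv_coord]; simp
  have h1 : Integrable (fun y : E2 => fderiv ℝ (fun z : E2 => z j) y (eb j) * g y) volume := by
    simp only [hc, one_mul]; exact i1
  have h2 : Integrable (fun y : E2 => y j * fderiv ℝ g y (eb j)) volume := by
    simp only [hg']; exact i2
  calc ∫ y : E2, y j * g' y = ∫ y : E2, y j * fderiv ℝ g y (eb j) := by simp only [hg']
    _ = - ∫ y : E2, fderiv ℝ (fun z : E2 => z j) y (eb j) * g y :=
        ibp (coord_diff j) hg h1 h2 i3
    _ = - ∫ y : E2, g y := by simp only [hc, one_mul]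

/-- `∫ yⱼ f ∂ⱼf = -(1/2) ∫ f²`. -/
lemma idA (j : Fin 2) (f : SchwartzMap E2 ℝ) :
    ∫ y : E2, y j * (f y * Dv j f y) = -(1/2) * ∫ y : E2, f y * f y := by
  have hg' : ∀ y, fderiv ℝ (fun z : E2 => f z * f z) y (eb j) = 2 * (f y * Dv j f y) := by
    intro y
    rw [fderiv_mul_apply f.differentiable f.differentiable]
    simp only [← Dv_apply]; ring
  have base : Integrable (fun y : E2 => y j * (f y * Dv j f y)) volume :=
    integrable_eq (xMul j (mulS f (Dv j f))) (fun y => by rw [xMul_apply, mulS_apply]; ring)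
  have i1 : Integrable (fun y : E2 => f y * f y) volume :=
    integrable_eq (mulS f f) (fun y => (mulS_apply f f y).symm)
  have i2 : Integrable (fun y : E2 => y j * (2 * (f y * Dv j f y))) volume :=
    (base.const_mul 2).congr (Filter.Eventually.of_forall fun y => by ring)
  have i3 : Integrable (fun y : E2 => y j * (f y * f y)) volume :=
    integrable_eq (xMul j (mulS f f)) (fun y => by rw [xMul_apply, mulS_apply]; ring)
  have kd := key_div j (f.differentiable.mul f.differentiable) hg' i1 i2 i3
  rw [show (fun y : E2 => y j * (2 * (f y * Dv j f y)))
      = fun y : E2 => 2 * (y j * (f y * Dv j f y)) from funext fun y => by ring,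
    integral_const_mul _ _] at kd
  simp only [Pi.mul_apply] at kd
  linarith

/-- `∫ yⱼ f³ ∂ⱼf = -(1/4) ∫ f⁴`. -/
lemma idB (j : Fin 2) (f : SchwartzMap E2 ℝ) :
    ∫ y : E2, y j * ((f y)^3 * Dv j f y) = -(1/4) * ∫ y : E2, (f y)^4 := by
  have hd2 : Differentiable ℝ (fun z : E2 => f z * f z) := f.differentiable.mul f.differentiable
  have hg' : ∀ y, fderiv ℝ (fun z : E2 => (f z)^4) y (eb j) = 4 * ((f y)^3 * Dv j f y) := by
    intro y
    rw [show (fun z : E2 => (f z)^4) = fun z : E2 => (f z * f z) * (f z * f z)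
        from funext fun z => by ring]
    rw [fderiv_mul_apply hd2 hd2, fderiv_mul_apply f.differentiable f.differentiable]
    simp only [← Dv_apply]; ring
  have base : Integrable (fun y : E2 => y j * ((f y)^3 * Dv j f y)) volume :=
    integrable_eq (xMul j (mulS (mulS (mulS f f) f) (Dv j f)))
      (fun y => by simp only [xMul_apply, mulS_apply]; ring)
  have i1 : Integrable (fun y : E2 => (f y)^4) volume :=
    integrable_eq (mulS (mulS f f) (mulS f f))
      (fun y => by simp only [mulS_apply]; ring)
  have i2 : Integrable (fun y : E2 => y j * (4 * ((f y)^3 * Dv j f y))) volume :=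
    (base.const_mul 4).congr (Filter.Eventually.of_forall fun y => by ring)
  have i3 : Integrable (fun y : E2 => y j * (f y)^4) volume :=
    integrable_eq (xMul j (mulS (mulS f f) (mulS f f)))
      (fun y => by simp only [xMul_apply, mulS_apply]; ring)
  have hdiff4 : Differentiable ℝ (fun z : E2 => (f z)^4) := by
    rw [show (fun z : E2 => (f z)^4) = fun z : E2 => (f z * f z) * (f z * f z)
        from funext fun z => by ring]
    exact hd2.mul hd2
  have kd := key_div j hdiff4 hg' i1 i2 i3
  rw [show (fun y : E2 => y j * (4 * ((f y)^3 * Dv j f y)))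
      = fun y : E2 => 4 * (y j * ((f y)^3 * Dv j f y)) from funext fun y => by ring,
    integral_const_mul _ _] at kd
  linarith

/-- IBP with a coordinate-weighted Schwartz factor. -/
lemma idL3 (i j : Fin 2) (f g : SchwartzMap E2 ℝ) :
    ∫ y : E2, (y j * f y) * Dv i g y
      = -((if j = i then (1:ℝ) else 0) * ∫ y : E2, f y * g y)
        - ∫ y : E2, y j * (Dv i f y * g y) := by
  have hF : Differentiable ℝ (fun y : E2 => y j * f y) := (coord_diff j).mul f.differentiable
  have hder : ∀ y, fderiv ℝ (fun z : E2 => z j * f z) y (eb i)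
      = (if j = i then (1:ℝ) else 0) * f y + y j * Dv i f y := by
    intro y
    rw [fderiv_mul_apply (coord_diff j) f.differentiable, fderiv_coord]
    simp only [← Dv_apply]; ring
  have b1 : Integrable (fun y : E2 => (if j = i then (1:ℝ) else 0) * (f y * g y)) volume :=
    (integrable_eq (mulS f g) fun y => (mulS_apply f g y).symm).const_mul _
  have b2 : Integrable (fun y : E2 => y j * (Dv i f y * g y)) volume :=
    integrable_eq (xMul j (mulS (Dv i f) g)) (fun y => by rw [xMul_apply, mulS_apply]; ring)
  have h1 : Integrable (fun y : E2 => fderiv ℝ (fun z : E2 => z j * f z) y (eb i) * g y) volume := by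
    simp only [hder]
    exact (b1.add b2).congr (Filter.Eventually.of_forall fun y => by simp only [Pi.add_apply]; ring)
  have h2 : Integrable (fun y : E2 => (y j * f y) * fderiv ℝ (⇑g) y (eb i)) volume :=
    integrable_eq (xMul j (mulS f (Dv i g)))
      (fun y => by rw [xMul_apply, mulS_apply, Dv_apply]; ring)
  have h3 : Integrable (fun y : E2 => (y j * f y) * g y) volume :=
    integrable_eq (xMul j (mulS f g)) (fun y => by rw [xMul_apply, mulS_apply]; ring)
  have key := ibp (v := eb i) hF g.differentiable h1 h2 h3
  simp only [hder] at key
  rw [show (fun y : E2 => ((if j = i then (1:ℝ) else 0) * f y + y j * Dv i f y) * g y)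
      = fun y : E2 => (if j = i then (1:ℝ) else 0) * (f y * g y) + y j * (Dv i f y * g y)
      from funext fun y => by ring, integral_add b1 b2, integral_const_mul _ _] at key
  have key' : ∫ y : E2, (y j * f y) * Dv i g y
      = -((if j = i then (1:ℝ) else 0) * (∫ y : E2, f y * g y)
          + ∫ y : E2, y j * (Dv i f y * g y)) := key
  rw [key']; ring

/-- symmetry of second derivatives -/
lemma Dsymm (Q : SchwartzMap E2 ℝ) (i j : Fin 2) (y : E2) :
    Dv i (Dv j Q) y = Dv j (Dv i Q) y := by
  have hsym : IsSymmSndFDerivAt ℝ (⇑Q) y :=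
    ((Q.smooth 2).contDiffAt).isSymmSndFDerivAt (by norm_num)
  have hd : Differentiable ℝ (fderiv ℝ (⇑Q)) :=
    (ContDiff.fderiv_right (Q.smooth ⊤) (m := 1)
      (by exact WithTop.coe_le_coe.mpr le_top)).differentiable (by norm_num)
  have key : ∀ a b : Fin 2, Dv a (Dv b Q) y = fderiv ℝ (fderiv ℝ ⇑Q) y (eb a) (eb b) := by
    intro a b
    have hcoe : (⇑(Dv b Q)) = fun z => fderiv ℝ (⇑Q) z (eb b) := rfl
    show fderiv ℝ (⇑(Dv b Q)) y (eb a) = _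
    rw [hcoe, fderiv_clm_apply (𝕜 := ℝ) (hd y) (differentiableAt_const (eb b))]
    simp
  rw [key, key, hsym]

end GSaux

open GSaux in
/-- A Schwartz solution `Q` of `ΔQ - Q + Q³ = 0` on `ℝ²` has vanishing energy:
`∫ |∇Q|² = (1/2) ∫ Q⁴`. -/
theorem ground_state_zero_energy (Q : SchwartzMap E2 ℝ)
    (heq : ∀ y : E2, lap (⇑Q) y - Q y + (Q y) ^ 3 = 0) :
    (∫ y : E2, ∑ i, (pd i (⇑Q) y) ^ 2) = (1 / 2) * ∫ y : E2, (Q y) ^ 4 := by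
  classical
  set M2 := ∫ y : E2, Q y * Q y with hM2def
  set M4 := ∫ y : E2, (Q y) ^ 4 with hM4def
  set C : Fin 2 → Fin 2 → ℝ := fun i j => ∫ y : E2, Dv i Q y * Dv j Q y with hCdef
  -- pointwise form of the equation
  have hEqpt : ∀ y : E2, (∑ i, Dv i (Dv i Q) y) = Q y - (Q y) ^ 3 := by
    intro y
    have h := heq y
    have hlap : lap (⇑Q) y = ∑ i, Dv i (Dv i Q) y := rfl
    rw [hlap] at h
    linarith
  -- basic integrability facts
  have intQQ : Integrable (fun y : E2 => Q y * Q y) volume :=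
    integrable_eq (mulS Q Q) (fun y => (mulS_apply Q Q y).symm)
  have intQ4 : Integrable (fun y : E2 => (Q y) ^ 4) volume :=
    integrable_eq (mulS (mulS Q Q) (mulS Q Q)) (fun y => by simp only [mulS_apply]; ring)
  -- Step 1 : multiply the equation by Q and integrate
  have int_QQii : ∀ i : Fin 2, Integrable (fun y : E2 => Q y * Dv i (Dv i Q) y) volume :=
    fun i => integrable_eq (mulS Q (Dv i (Dv i Q))) (fun y => (mulS_apply _ _ y).symm)
  have s1 : ∫ y : E2, ∑ i, Q y * Dv i (Dv i Q) y
      = ∑ i : Fin 2, ∫ y : E2, Q y * Dv i (Dv i Q) y :=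
    integral_finset_sum _ (fun i _ => int_QQii i)
  have s2 : ∫ y : E2, ∑ i, Q y * Dv i (Dv i Q) y = M2 - M4 := by
    rw [show (fun y : E2 => ∑ i, Q y * Dv i (Dv i Q) y)
        = fun y : E2 => Q y * Q y - (Q y) ^ 4 from funext fun y => by
          rw [← Finset.mul_sum, hEqpt y]; ring]
    rw [integral_sub intQQ intQ4]
  have s3 : ∑ i : Fin 2, ∫ y : E2, Q y * Dv i (Dv i Q) y = ∑ i : Fin 2, -(C i i) :=
    Finset.sum_congr rfl fun i _ => L1 i Q (Dv i Q)
  have step1 : M2 - M4 = -(C 0 0) - C 1 1 := by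
    rw [← s2, s1, s3, Fin.sum_univ_two]; ring
  -- Step 2 : Pohozaev identity, multiply by yⱼ ∂ⱼQ and integrate
  have haj : ∀ j : Fin 2, ∫ y : E2, y j * (Q y * Dv j Q y) = -(1/2) * M2 := fun j => idA j Q
  have hbj : ∀ j : Fin 2, ∫ y : E2, y j * ((Q y) ^ 3 * Dv j Q y) = -(1/4) * M4 :=
    fun j => idB j Q
  have hdij : ∀ i j : Fin 2, ∫ y : E2, y j * (Dv i (Dv j Q) y * Dv i Q y)
      = -(1/2) * C i i := by
    intro i j
    rw [show (fun y : E2 => y j * (Dv i (Dv j Q) y * Dv i Q y))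
        = fun y : E2 => y j * (Dv i Q y * Dv j (Dv i Q) y) from funext fun y => by
          rw [Dsymm Q i j y]; ring]
    exact idA j (Dv i Q)
  have hcij : ∀ i j : Fin 2, ∫ y : E2, (y j * Dv j Q y) * Dv i (Dv i Q) y
      = -((if j = i then (1:ℝ) else 0) * C j i) + (1/2) * C i i := by
    intro i j
    rw [idL3 i j (Dv j Q) (Dv i Q), hdij i j]
    rw [hCdef]; ring
  -- integrate the equation against yⱼ ∂ⱼQ
  have int_cjQii : ∀ i j : Fin 2,
      Integrable (fun y : E2 => (y j * Dv j Q y) * Dv i (Dv i Q) y) volume := fun i j =>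
    integrable_eq (xMul j (mulS (Dv j Q) (Dv i (Dv i Q))))
      (fun y => by simp only [xMul_apply, mulS_apply]; ring)
  have intaj : ∀ j : Fin 2, Integrable (fun y : E2 => y j * (Q y * Dv j Q y)) volume :=
    fun j => integrable_eq (xMul j (mulS Q (Dv j Q)))
      (fun y => by simp only [xMul_apply, mulS_apply]; ring)
  have intbj : ∀ j : Fin 2, Integrable (fun y : E2 => y j * ((Q y) ^ 3 * Dv j Q y)) volume :=
    fun j => integrable_eq (xMul j (mulS (mulS (mulS Q Q) Q) (Dv j Q)))
      (fun y => by simp only [xMul_apply, mulS_apply]; ring)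
  have poh : ∀ j : Fin 2,
      -(1/2) * M2 - (-(1/4) * M4)
        = ∑ i : Fin 2, (-((if j = i then (1:ℝ) else 0) * C j i) + (1/2) * C i i) := by
    intro j
    have lhs : ∫ y : E2, ∑ i, (y j * Dv j Q y) * Dv i (Dv i Q) y
        = -(1/2) * M2 - (-(1/4) * M4) := by
      rw [show (fun y : E2 => ∑ i, (y j * Dv j Q y) * Dv i (Dv i Q) y)
          = fun y : E2 => y j * (Q y * Dv j Q y) - y j * ((Q y) ^ 3 * Dv j Q y)
          from funext fun y => by rw [← Finset.mul_sum, hEqpt y]; ring]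
      rw [integral_sub (intaj j) (intbj j), haj j, hbj j]
    rw [← lhs, integral_finset_sum _ (fun i _ => int_cjQii i j)]
    exact Finset.sum_congr rfl fun i _ => hcij i j
  have poh0 := poh 0
  have poh1 := poh 1
  rw [Fin.sum_univ_two] at poh0 poh1
  norm_num at poh0 poh1
  -- conclude: M2 = (1/2) M4, hence C 0 0 + C 1 1 = M4 - M2 = (1/2) M4
  have hM2 : M2 = (1/2) * M4 := by linarith
  -- final computation
  have gfin : ∫ y : E2, ∑ i, (pd i (⇑Q) y) ^ 2 = C 0 0 + C 1 1 := by
    have hint : ∀ i : Fin 2, Integrable (fun y : E2 => (Dv i Q y) ^ 2) volume := fun i =>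
      integrable_eq (mulS (Dv i Q) (Dv i Q)) (fun y => by simp only [mulS_apply]; ring)
    have h0 : (fun y : E2 => ∑ i, (pd i (⇑Q) y) ^ 2)
        = fun y : E2 => ∑ i : Fin 2, (Dv i Q y) ^ 2 := rfl
    rw [h0, integral_finset_sum _ (fun i _ => hint i), Fin.sum_univ_two]
    have hsq : ∀ i : Fin 2, ∫ y : E2, (Dv i Q y) ^ 2 = C i i := by
      intro i
      rw [hCdef, show (fun y : E2 => (Dv i Q y) ^ 2) = fun y : E2 => Dv i Q y * Dv i Q y
        from funext fun y => by ring]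
    rw [hsq 0, hsq 1]
  rw [gfin]
  linarith
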